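/- Let X be a real random variable with E[X] = 0 which is subgaussian with variance proxy σ² > 0, i.e. E[exp(tX)] ≤ exp(σ²t²/2) for all t ∈ ℝ. Then for every λ with 0 ≤ λ < 1/(2σ²), one has E[exp(λX²)] ≤ 1 + 4λσ²/(1 − 2λσ²). -/

import Mathlib

open MeasureTheory ProbabilityTheory Set Filter

/-- Chernoff tail bound for a subgaussian random variable. -/
lemma stmt_10_tail {Ω : Type*} [MeasurableSpace Ω] (μ : Measure Ω) [IsProbabilityMeasure μ]
    (Y : Ω → ℝ) (hY : Measurable Y) (σ2 : ℝ) (hσ2 : 0 < σ2)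
    (hsub : ∀ t : ℝ, (∫⁻ ω, ENNReal.ofReal (Real.exp (t * Y ω)) ∂μ) ≤
      ENNReal.ofReal (Real.exp (σ2 * t ^ 2 / 2)))
    (t : ℝ) (ht : 0 < t) :
    μ {ω | t ≤ Y ω} ≤ ENNReal.ofReal (Real.exp (-(t ^ 2 / (2 * σ2)))) := by
  set s : ℝ := t / σ2 with hs
  have hs0 : 0 < s := div_pos ht hσ2
  have key : ENNReal.ofReal (Real.exp (s * t)) * μ {ω | t ≤ Y ω} ≤
      ENNReal.ofReal (Real.exp (σ2 * s ^ 2 / 2)) := by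
    refine le_trans ?_ (hsub s)
    have hmono : μ {ω | t ≤ Y ω} ≤
        μ {ω | ENNReal.ofReal (Real.exp (s * t)) ≤ ENNReal.ofReal (Real.exp (s * Y ω))} := by
      apply measure_mono
      intro ω hω
      exact ENNReal.ofReal_le_ofReal (Real.exp_le_exp.mpr
        (mul_le_mul_of_nonneg_left hω hs0.le))
    refine le_trans (mul_le_mul_right hmono _) ?_
    exact mul_meas_ge_le_lintegral₀
      ((hY.const_mul s).exp.ennreal_ofReal.aemeasurable) _
  have hmul : μ {ω | t ≤ Y ω} =
      ENNReal.ofReal (Real.exp (-(s * t))) *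
        (ENNReal.ofReal (Real.exp (s * t)) * μ {ω | t ≤ Y ω}) := by
    rw [← mul_assoc, ← ENNReal.ofReal_mul (Real.exp_pos _).le, ← Real.exp_add]
    simp
  rw [hmul]
  refine le_trans (mul_le_mul_right key _) ?_
  rw [← ENNReal.ofReal_mul (Real.exp_pos _).le, ← Real.exp_add]
  apply le_of_eq
  congr 1
  rw [hs]
  field_simp
  ring

/-- If `X` is a centered random variable which is subgaussian with
variance proxy `σ² > 0` (i.e. `E[exp(tX)] ≤ exp(σ²t²/2)` for all `t`), then for every
`0 ≤ λ < 1/(2σ²)` one has `E[exp(λX²)] ≤ 1 + 4λσ²/(1 - 2λσ²)`. -/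
theorem stmt_10 {Ω : Type*} [MeasurableSpace Ω] (μ : Measure Ω) [IsProbabilityMeasure μ]
    (X : Ω → ℝ) (hX : Measurable X) (hXint : Integrable X μ)
    (hX0 : (∫ ω, X ω ∂μ) = 0)
    (σ2 : ℝ) (hσ2 : 0 < σ2)
    (hsub : ∀ t : ℝ, (∫⁻ ω, ENNReal.ofReal (Real.exp (t * X ω)) ∂μ) ≤
      ENNReal.ofReal (Real.exp (σ2 * t ^ 2 / 2)))
    (l : ℝ) (hl0 : 0 ≤ l) (hl : l < 1 / (2 * σ2)) :
    (∫⁻ ω, ENNReal.ofReal (Real.exp (l * X ω ^ 2)) ∂μ) ≤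
      ENNReal.ofReal (1 + 4 * l * σ2 / (1 - 2 * l * σ2)) := by
  have hden : 0 < 1 - 2 * l * σ2 := by
    have h := (lt_div_iff₀ (by positivity : (0:ℝ) < 2 * σ2)).mp hl
    nlinarith
  set a : ℝ := 1 / (2 * σ2) - l with ha
  have ha0 : 0 < a := sub_pos.mpr hl
  set g : ℝ → ℝ := fun s => 2 * l * s * Real.exp (l * s ^ 2) with hg
  -- derivative of exp(l s^2)
  have hderivG : ∀ x : ℝ, HasDerivAt (fun s => Real.exp (l * s ^ 2)) (g x) x := by
    intro x
    have h1 : HasDerivAt (fun s : ℝ => l * s ^ 2) (l * (2 * x)) x := by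
      simpa using (hasDerivAt_pow 2 x).const_mul l
    have h2 := h1.exp
    convert h2 using 1
    simp [hg]; ring
  have hgcont : Continuous g := by
    apply Continuous.mul (by continuity)
    exact Real.continuous_exp.comp (continuous_const.mul (continuous_pow 2))
  -- FTC on intervals
  have hFTC : ∀ b : ℝ, (∫ s in (0:ℝ)..b, g s) = Real.exp (l * b ^ 2) - 1 := by
    intro b
    have := intervalIntegral.integral_eq_sub_of_hasDerivAt
      (f := fun s => Real.exp (l * s ^ 2)) (f' := g)
      (fun x _ => hderivG x) (hgcont.intervalIntegrable 0 b)
    simpa using this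
  -- pointwise decomposition
  have hpt : ∀ ω, ENNReal.ofReal (Real.exp (l * X ω ^ 2)) =
      1 + ENNReal.ofReal (∫ s in (0:ℝ)..|X ω|, g s) := by
    intro ω
    rw [hFTC, sq_abs]
    have h1 : (1:ℝ) ≤ Real.exp (l * X ω ^ 2) := by
      rw [show (1:ℝ) = Real.exp 0 by simp]
      exact Real.exp_le_exp.mpr (by positivity)
    rw [show Real.exp (l * X ω ^ 2) = 1 + (Real.exp (l * X ω ^ 2) - 1) by ring,
      ENNReal.ofReal_add zero_le_one (by linarith)]
    simp
  -- layer cake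
  have hlc : (∫⁻ ω, ENNReal.ofReal (∫ s in (0:ℝ)..|X ω|, g s) ∂μ) =
      ∫⁻ t in Ioi (0:ℝ), μ {ω | t ≤ |X ω|} * ENNReal.ofReal (g t) := by
    apply lintegral_comp_eq_lintegral_meas_le_mul μ
      (ae_of_all _ fun ω => abs_nonneg _) hX.abs.aemeasurable
      (fun t _ => hgcont.intervalIntegrable 0 t)
    filter_upwards [self_mem_ae_restrict measurableSet_Ioi] with t ht
    have : (0:ℝ) < t := ht
    positivity
  -- tail bound for |X|
  have hsubneg : ∀ t : ℝ, (∫⁻ ω, ENNReal.ofReal (Real.exp (t * (-X ω))) ∂μ) ≤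
      ENNReal.ofReal (Real.exp (σ2 * t ^ 2 / 2)) := by
    intro t
    have h := hsub (-t)
    simp only [neg_mul, neg_neg, mul_neg] at h ⊢
    convert h using 3
    ring
  have htail : ∀ t : ℝ, 0 < t → μ {ω | t ≤ |X ω|} ≤
      ENNReal.ofReal (2 * Real.exp (-(t ^ 2 / (2 * σ2)))) := by
    intro t ht
    have hset : {ω | t ≤ |X ω|} ⊆ {ω | t ≤ X ω} ∪ {ω | t ≤ -X ω} := by
      intro ω hω
      have hω' : t ≤ |X ω| := hω
      rcases le_abs.mp hω' with h | h
      · exact Or.inl h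
      · exact Or.inr h
    calc μ {ω | t ≤ |X ω|} ≤ μ ({ω | t ≤ X ω} ∪ {ω | t ≤ -X ω}) := measure_mono hset
      _ ≤ μ {ω | t ≤ X ω} + μ {ω | t ≤ -X ω} := measure_union_le _ _
      _ ≤ ENNReal.ofReal (Real.exp (-(t ^ 2 / (2 * σ2)))) +
          ENNReal.ofReal (Real.exp (-(t ^ 2 / (2 * σ2)))) := by
          gcongr
          · exact stmt_10_tail μ X hX σ2 hσ2 hsub t ht
          · exact stmt_10_tail μ (fun ω => -X ω) hX.neg σ2 hσ2 hsubneg t ht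
      _ = ENNReal.ofReal (2 * Real.exp (-(t ^ 2 / (2 * σ2)))) := by
          rw [← ENNReal.ofReal_add (Real.exp_pos _).le (Real.exp_pos _).le]
          ring_nf
  -- the dominating density
  set F' : ℝ → ℝ := fun t => 4 * l * t * Real.exp (-(a * t ^ 2)) with hF'
  have hcomb : ∀ t : ℝ, 2 * Real.exp (-(t ^ 2 / (2 * σ2))) * g t = F' t := by
    intro t
    simp only [hg, hF']
    have he : Real.exp (l * t ^ 2) * Real.exp (-(t ^ 2 / (2 * σ2))) =
        Real.exp (-(a * t ^ 2)) := by
      rw [← Real.exp_add]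
      congr 1
      rw [ha]
      field_simp
      ring
    calc 2 * Real.exp (-(t ^ 2 / (2 * σ2))) * (2 * l * t * Real.exp (l * t ^ 2))
        = (2 * (2 * l * t)) * (Real.exp (l * t ^ 2) * Real.exp (-(t ^ 2 / (2 * σ2)))) := by
          ring
      _ = 4 * l * t * Real.exp (-(a * t ^ 2)) := by rw [he]; ring
  -- FTC on Ioi 0 for F'
  set F : ℝ → ℝ := fun t => -(2 * l / a) * Real.exp (-(a * t ^ 2)) with hFdef
  have hderivF : ∀ x : ℝ, HasDerivAt F (F' x) x := by
    intro x
    have h1 : HasDerivAt (fun t : ℝ => -(a * t ^ 2)) (-(a * (2 * x))) x := by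
      exact (((hasDerivAt_pow 2 x).const_mul a).neg).congr_deriv (by norm_num)
    have h2 := (h1.exp).const_mul (-(2 * l / a))
    refine h2.congr_deriv ?_
    show _ = 4 * l * x * Real.exp (-(a * x ^ 2))
    field_simp
    ring
  have hFtend : Tendsto F atTop (nhds 0) := by
    have h1 : Tendsto (fun t : ℝ => -(a * t ^ 2)) atTop atBot :=
      tendsto_neg_atTop_atBot.comp ((tendsto_pow_atTop two_ne_zero).const_mul_atTop ha0)
    have h2 : Tendsto (fun t : ℝ => Real.exp (-(a * t ^ 2))) atTop (nhds 0) :=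
      Real.tendsto_exp_atBot.comp h1
    have h3 := h2.const_mul (-(2 * l / a))
    rw [mul_zero] at h3
    exact h3
  have hF'nonneg : ∀ x ∈ Ioi (0:ℝ), 0 ≤ F' x := by
    intro x hx
    have : (0:ℝ) < x := hx
    simp only [hF']
    positivity
  have hF'int : IntegrableOn F' (Ioi (0:ℝ)) :=
    integrableOn_Ioi_deriv_of_nonneg' (fun x _ => hderivF x) hF'nonneg hFtend
  have hF'val : (∫ t in Ioi (0:ℝ), F' t) = 4 * l * σ2 / (1 - 2 * l * σ2) := by
    rw [integral_Ioi_of_hasDerivAt_of_tendsto' (fun x _ => hderivF x) hF'int hFtend]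
    have haeq : a = (1 - 2 * l * σ2) / (2 * σ2) := by
      rw [ha]; field_simp
    simp only [hFdef]
    norm_num
    rw [haeq, div_div_eq_mul_div]
    congr 1
    ring
  -- put everything together
  calc (∫⁻ ω, ENNReal.ofReal (Real.exp (l * X ω ^ 2)) ∂μ)
      = ∫⁻ ω, (1 + ENNReal.ofReal (∫ s in (0:ℝ)..|X ω|, g s)) ∂μ := by
        exact lintegral_congr fun ω => hpt ω
    _ = 1 + ∫⁻ ω, ENNReal.ofReal (∫ s in (0:ℝ)..|X ω|, g s) ∂μ := by
        rw [lintegral_add_left measurable_const]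
        simp
    _ = 1 + ∫⁻ t in Ioi (0:ℝ), μ {ω | t ≤ |X ω|} * ENNReal.ofReal (g t) := by rw [hlc]
    _ ≤ 1 + ∫⁻ t in Ioi (0:ℝ), ENNReal.ofReal (F' t) := by
        gcongr 1 + ?_
        apply setLIntegral_mono' measurableSet_Ioi
        intro t ht
        calc μ {ω | t ≤ |X ω|} * ENNReal.ofReal (g t)
            ≤ ENNReal.ofReal (2 * Real.exp (-(t ^ 2 / (2 * σ2)))) * ENNReal.ofReal (g t) :=
              mul_le_mul_left (htail t ht) _
          _ = ENNReal.ofReal (F' t) := by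
              rw [← ENNReal.ofReal_mul (by positivity), hcomb]
    _ = 1 + ENNReal.ofReal (4 * l * σ2 / (1 - 2 * l * σ2)) := by
        rw [← hF'val, ← ofReal_integral_eq_lintegral_ofReal hF'int]
        filter_upwards [self_mem_ae_restrict measurableSet_Ioi] with t ht
        exact hF'nonneg t ht
    _ = ENNReal.ofReal (1 + 4 * l * σ2 / (1 - 2 * l * σ2)) := by
        rw [ENNReal.ofReal_add zero_le_one (by positivity)]
        simp
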